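/- Let m, n, s > 1 be integers such that n divides 1 + s + s² + ⋯ + s^{m−1} and gcd(n, 1 + s + ⋯ + s^{j−1}) = 1 for all 1 ≤ j < m. Let G be a group of order mn generated by elements a and b satisfying b^n = 1, a^m = 1, and a·b·a⁻¹ = b^s, where b has order n and a has order m. Then G is a flower group with pistil the trivial subgroup {1}, and its set of petals consists of exactly n cyclic subgroups of order m (namely ⟨b^i a⟩ for 0 ≤ i < n) and one cyclic subgroup of order n (namely ⟨b⟩). -/

import Mathlib

/-- A cyclic subgroup `C` of `G` is a μ-subgroup if it is not contained in any cyclic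
subgroup of `G` other than `C` itself. -/
def IsMuSubgroup {G : Type*} [Group G] (C : Subgroup G) : Prop :=
  IsCyclic ↥C ∧ ∀ K : Subgroup G, IsCyclic ↥K → C ≤ K → C = K

/-- A noncyclic group `G` is a flower group with pistil `C0` if any two distinct
μ-subgroups of `G` intersect exactly in `C0`. -/
def IsFlowerGroup {G : Type*} [Group G] (C0 : Subgroup G) : Prop :=
  ¬ IsCyclic G ∧
    ∀ C C' : Subgroup G, IsMuSubgroup C → IsMuSubgroup C' → C ≠ C' → C ⊓ C' = C0

section Aux

variable {G : Type*} [Group G]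

lemma aux_isCyclic_zpowers (g : G) : IsCyclic ↥(Subgroup.zpowers g) := by
  refine ⟨⟨⟨g, Subgroup.mem_zpowers g⟩, ?_⟩⟩
  rintro ⟨y, hy⟩
  obtain ⟨k, hk⟩ := Subgroup.mem_zpowers_iff.mp hy
  exact Subgroup.mem_zpowers_iff.mpr ⟨k, by ext; simpa using hk⟩

lemma aux_cyclic_eq_zpowers {K : Subgroup G} (h : IsCyclic ↥K) :
    ∃ g : G, g ∈ K ∧ K = Subgroup.zpowers g := by
  obtain ⟨⟨g, hg⟩, hgen⟩ := h.exists_generator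
  refine ⟨g, hg, le_antisymm (fun y hy => ?_) (Subgroup.zpowers_le.mpr hg)⟩
  obtain ⟨k, hk⟩ := Subgroup.mem_zpowers_iff.mp (hgen ⟨y, hy⟩)
  exact Subgroup.mem_zpowers_iff.mpr ⟨k, by simpa using congrArg Subtype.val hk⟩

lemma aux_mem_zpowers_pow [Finite G] (g x : G) :
    x ∈ Subgroup.zpowers g ↔ ∃ k, k < orderOf g ∧ g ^ k = x := by
  constructor
  · intro h
    obtain ⟨k, hk⟩ := (Submonoid.mem_powers_iff x g).mp (mem_powers_iff_mem_zpowers.mpr h)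
    exact ⟨k % orderOf g, Nat.mod_lt _ (orderOf_pos g),
      by rw [pow_mod_orderOf]; exact hk⟩
  · rintro ⟨k, -, rfl⟩
    exact Subgroup.pow_mem _ (Subgroup.mem_zpowers g) k

end Aux

/-- Let m, n, s > 1 with n ∣ 1 + s + ⋯ + s^(m−1) and
gcd(n, 1 + s + ⋯ + s^(j−1)) = 1 for 1 ≤ j < m. If G is a group of order mn generated by
a and b with b^n = a^m = 1, orderOf b = n, orderOf a = m and a·b·a⁻¹ = b^s, then G is a
flower group with pistil {1}, whose petals are the n cyclic subgroups ⟨b^i a⟩ (0 ≤ i < n)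
of order m together with the cyclic subgroup ⟨b⟩ of order n. -/
theorem stmt18 (m n s : ℕ) (hm : 1 < m) (hn : 1 < n) (hs : 1 < s)
    (hdvd : n ∣ ∑ j ∈ Finset.range m, s ^ j)
    (hcop : ∀ j : ℕ, 1 ≤ j → j < m → Nat.Coprime n (∑ i ∈ Finset.range j, s ^ i))
    {G : Type*} [Group G] [Finite G] (hcard : Nat.card G = m * n)
    (a b : G) (hgen : Subgroup.closure {a, b} = ⊤)
    (hbn : b ^ n = 1) (ham : a ^ m = 1)
    (hob : orderOf b = n) (hoa : orderOf a = m)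
    (hrel : a * b * a⁻¹ = b ^ s) :
    IsFlowerGroup (⊥ : Subgroup G) ∧
    (∀ C : Subgroup G, IsMuSubgroup C ↔
      C = Subgroup.zpowers b ∨ ∃ i < n, C = Subgroup.zpowers (b ^ i * a)) ∧
    Nat.card (Subgroup.zpowers b) = n ∧
    (∀ i < n, Nat.card (Subgroup.zpowers (b ^ i * a)) = m) ∧
    Function.Injective (fun i : Fin n => Subgroup.zpowers (b ^ (i : ℕ) * a)) := by
  have n0 : 0 < n := by omega
  have m0 : 0 < m := by omega
  -- conjugation lemmas
  have hconj : ∀ i : ℕ, a * b ^ i = b ^ (s * i) * a := by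
    intro i
    have h1 : a * b ^ i * a⁻¹ = b ^ (s * i) := by
      rw [← conj_pow, hrel, ← pow_mul]
    calc a * b ^ i = a * b ^ i * a⁻¹ * a := by group
      _ = b ^ (s * i) * a := by rw [h1]
  have hpc : ∀ j i : ℕ, a ^ j * b ^ i = b ^ (i * s ^ j) * a ^ j := by
    intro j
    induction j with
    | zero => intro i; simp
    | succ j ih =>
      intro i
      calc a ^ (j+1) * b ^ i = a ^ j * (a * b ^ i) := by rw [pow_succ]; group
        _ = a ^ j * (b ^ (s * i) * a) := by rw [hconj]
        _ = (a ^ j * b ^ (s * i)) * a := by group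
        _ = b ^ (s * i * s ^ j) * a ^ j * a := by rw [ih]
        _ = b ^ (i * s ^ (j+1)) * a ^ (j+1) := by
            rw [show s * i * s ^ j = i * s ^ (j+1) by ring, pow_succ a, mul_assoc]
  have hge : ∀ i j : ℕ, (b ^ i * a) ^ j =
      b ^ (i * ∑ k ∈ Finset.range j, s ^ k) * a ^ j := by
    intro i j
    induction j with
    | zero => simp
    | succ j ih =>
      rw [pow_succ, ih, Finset.sum_range_succ]
      calc b ^ (i * ∑ k ∈ Finset.range j, s ^ k) * a ^ j * (b ^ i * a)
          = b ^ (i * ∑ k ∈ Finset.range j, s ^ k) * (a ^ j * b ^ i) * a := by group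
        _ = b ^ (i * ∑ k ∈ Finset.range j, s ^ k) * (b ^ (i * s ^ j) * a ^ j) * a := by
            rw [hpc]
        _ = b ^ (i * ∑ k ∈ Finset.range j, s ^ k + i * s ^ j) * (a ^ j * a) := by
            rw [pow_add]; group
        _ = b ^ (i * (∑ k ∈ Finset.range j, s ^ k + s ^ j)) * a ^ (j+1) := by
            rw [mul_add, pow_succ]
  -- reduction of exponents
  have hbred : ∀ i : ℕ, b ^ (i % n) = b ^ i := by
    intro i
    rw [show n = orderOf b from hob.symm]
    exact pow_mod_orderOf b i
  have hared : ∀ j : ℕ, a ^ (j % m) = a ^ j := by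
    intro j
    rw [show m = orderOf a from hoa.symm]
    exact pow_mod_orderOf a j
  -- every element is b^i * a^j
  have hsur : ∀ g : G, ∃ i, i < n ∧ ∃ j, j < m ∧ g = b ^ i * a ^ j := by
    have hT : ∀ g : G, ∃ i j : ℕ, g = b ^ i * a ^ j := by
      let T : Subgroup G :=
        { carrier := {x | ∃ i j : ℕ, x = b ^ i * a ^ j}
          one_mem' := ⟨0, 0, by simp⟩
          mul_mem' := by
            rintro x y ⟨i, j, rfl⟩ ⟨i', j', rfl⟩
            refine ⟨i + i' * s ^ j, j + j', ?_⟩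
            rw [pow_add, pow_add]
            calc b ^ i * a ^ j * (b ^ i' * a ^ j')
                = b ^ i * (a ^ j * b ^ i') * a ^ j' := by group
              _ = b ^ i * (b ^ (i' * s ^ j) * a ^ j) * a ^ j' := by rw [hpc]
              _ = b ^ i * b ^ (i' * s ^ j) * (a ^ j * a ^ j') := by group
          inv_mem' := by
            rintro x ⟨i, j, rfl⟩
            refine ⟨i * (n-1) * s ^ (j * (m-1)), j * (m-1), ?_⟩
            have hexp1 : i * (n-1) * s ^ (j * (m-1)) + i * s ^ (j * (m-1)) =
                n * (i * s ^ (j * (m-1))) := by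
              have h1 : n - 1 + 1 = n := Nat.succ_pred_eq_of_pos n0
              calc i * (n-1) * s ^ (j * (m-1)) + i * s ^ (j * (m-1))
                  = ((n-1) + 1) * (i * s ^ (j * (m-1))) := by ring
                _ = n * (i * s ^ (j * (m-1))) := by rw [h1]
            have hexp2 : j * (m-1) + j = m * j := by
              have h1 : m - 1 + 1 = m := Nat.succ_pred_eq_of_pos m0
              calc j * (m-1) + j = ((m-1) + 1) * j := by ring
                _ = m * j := by rw [h1]
            have key : b ^ (i * (n-1) * s ^ (j * (m-1))) * a ^ (j * (m-1)) *
                (b ^ i * a ^ j) = 1 := by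
              calc b ^ (i * (n-1) * s ^ (j * (m-1))) * a ^ (j * (m-1)) * (b ^ i * a ^ j)
                  = b ^ (i * (n-1) * s ^ (j * (m-1))) * (a ^ (j * (m-1)) * b ^ i) * a ^ j := by
                    group
                _ = b ^ (i * (n-1) * s ^ (j * (m-1))) *
                      (b ^ (i * s ^ (j * (m-1))) * a ^ (j * (m-1))) * a ^ j := by rw [hpc]
                _ = b ^ (i * (n-1) * s ^ (j * (m-1)) + i * s ^ (j * (m-1))) *
                      (a ^ (j * (m-1)) * a ^ j) := by rw [pow_add]; group
                _ = b ^ (n * (i * s ^ (j * (m-1)))) * a ^ (m * j) := by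
                    rw [hexp1, ← pow_add, hexp2]
                _ = (b ^ n) ^ (i * s ^ (j * (m-1))) * (a ^ m) ^ j := by
                    rw [← pow_mul, ← pow_mul]
                _ = 1 := by rw [hbn, ham, one_pow, one_pow, one_mul]
            exact inv_eq_of_mul_eq_one_left key
        }
      have hTtop : T = ⊤ := by
        rw [eq_top_iff, ← hgen]
        refine (Subgroup.closure_le T).mpr ?_
        intro x hx
        simp only [Set.mem_insert_iff, Set.mem_singleton_iff] at hx
        rcases hx with rfl | rfl
        · exact ⟨0, 1, by simp⟩
        · exact ⟨1, 0, by simp⟩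
      intro g
      have : g ∈ T := hTtop ▸ Subgroup.mem_top g
      exact this
    intro g
    obtain ⟨i, j, rfl⟩ := hT g
    exact ⟨i % n, Nat.mod_lt _ n0, j % m, Nat.mod_lt _ m0, by rw [hbred, hared]⟩
  -- uniqueness via cardinality
  have hcard2 : Nat.card (Fin n × Fin m) = Nat.card G := by
    have h1 : Nat.card (Fin n × Fin m) = n * m := by
      simp [Nat.card_eq_fintype_card]
    rw [h1, hcard, mul_comm]
  obtain ⟨e⟩ := Finite.card_eq.mp hcard2
  have hφs : Function.Surjective (fun p : Fin n × Fin m => b ^ (p.1 : ℕ) * a ^ (p.2 : ℕ)) := by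
    intro g
    obtain ⟨i, hi, j, hj, rfl⟩ := hsur g
    exact ⟨(⟨i, hi⟩, ⟨j, hj⟩), rfl⟩
  have hφi := hφs.injective_of_finite e
  have huniq : ∀ i j i' j' : ℕ, i < n → i' < n → j < m → j' < m →
      b ^ i * a ^ j = b ^ i' * a ^ j' → i = i' ∧ j = j' := by
    intro i j i' j' hi hi' hj hj' h
    have := hφi (a₁ := (⟨i, hi⟩, ⟨j, hj⟩)) (a₂ := (⟨i', hi'⟩, ⟨j', hj'⟩)) h
    simpa [Prod.ext_iff, Fin.ext_iff] using this
  have hcomp : ∀ i j i' j' : ℕ,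
      b ^ i * a ^ j = b ^ i' * a ^ j' ↔ (i % n = i' % n ∧ j % m = j' % m) := by
    intro i j i' j'
    constructor
    · intro h
      refine huniq _ _ _ _ (Nat.mod_lt _ n0) (Nat.mod_lt _ n0) (Nat.mod_lt _ m0)
        (Nat.mod_lt _ m0) ?_
      rw [hbred, hared, hbred, hared]; exact h
    · rintro ⟨h1, h2⟩
      rw [← hbred i, ← hared j, ← hbred i', ← hared j', h1, h2]
  -- orders of the petals' generators
  have hσm : ∀ i : ℕ, b ^ (i * ∑ k ∈ Finset.range m, s ^ k) = 1 := by
    intro i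
    obtain ⟨t, ht⟩ := hdvd
    rw [ht, show i * (n * t) = n * (i * t) by ring, pow_mul, hbn, one_pow]
  have hoc : ∀ i : ℕ, orderOf (b ^ i * a) = m := by
    intro i
    rw [orderOf_eq_iff m0]
    constructor
    · rw [hge, hσm, one_mul, ham]
    · intro k hk hk0 hcontra
      rw [hge] at hcontra
      have h10 : b ^ (i * ∑ kk ∈ Finset.range k, s ^ kk) * a ^ k = b ^ 0 * a ^ 0 := by
        simpa using hcontra
      have := ((hcomp _ k 0 0).mp h10).2
      rw [Nat.mod_eq_of_lt hk, Nat.zero_mod] at this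
      omega
  -- cardinalities
  have hQcard : Nat.card (Subgroup.zpowers b) = n := by rw [Nat.card_zpowers, hob]
  have hPcard : ∀ i : ℕ, Nat.card (Subgroup.zpowers (b ^ i * a)) = m := by
    intro i; rw [Nat.card_zpowers, hoc]
  -- membership descriptions
  have hmemQ : ∀ x : G, x ∈ Subgroup.zpowers b ↔ ∃ k, k < n ∧ b ^ k = x := by
    intro x; rw [aux_mem_zpowers_pow, hob]
  have hmemP : ∀ (i : ℕ) (x : G), x ∈ Subgroup.zpowers (b ^ i * a) ↔
      ∃ k, k < m ∧ b ^ (i * ∑ kk ∈ Finset.range k, s ^ kk) * a ^ k = x := by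
    intro i x
    rw [aux_mem_zpowers_pow, hoc]
    constructor
    · rintro ⟨k, hk, rfl⟩; exact ⟨k, hk, (hge i k).symm⟩
    · rintro ⟨k, hk, rfl⟩; exact ⟨k, hk, hge i k⟩
  -- covering by petals
  have hcover : ∀ g : G, g ∈ Subgroup.zpowers b ∨
      ∃ i, i < n ∧ g ∈ Subgroup.zpowers (b ^ i * a) := by
    intro g
    obtain ⟨i', hi', j, hj, rfl⟩ := hsur g
    rcases Nat.eq_zero_or_pos j with rfl | hj0
    · left; rw [hmemQ]; exact ⟨i', hi', by simp⟩
    · right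
      obtain ⟨x, -, hx⟩ := Nat.exists_mul_mod_eq_one_of_coprime
        ((hcop j hj0 hj).symm) hn
      have hx' : (∑ kk ∈ Finset.range j, s ^ kk) * x ≡ 1 [MOD n] := by
        show ((∑ kk ∈ Finset.range j, s ^ kk) * x) % n = 1 % n
        rw [hx, Nat.mod_eq_of_lt hn]
      refine ⟨(i' * x) % n, Nat.mod_lt _ n0, ?_⟩
      rw [hmemP]
      refine ⟨j, hj, (hcomp _ j i' j).mpr ⟨?_, rfl⟩⟩
      show Nat.ModEq n (((i' * x) % n) * ∑ kk ∈ Finset.range j, s ^ kk) i'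
      calc ((i' * x) % n) * ∑ kk ∈ Finset.range j, s ^ kk
          ≡ (i' * x) * ∑ kk ∈ Finset.range j, s ^ kk [MOD n] :=
            (Nat.mod_modEq _ n).mul_right _
        _ = i' * ((∑ kk ∈ Finset.range j, s ^ kk) * x) := by ring
        _ ≡ i' * 1 [MOD n] := Nat.ModEq.mul_left i' hx'
        _ = i' := mul_one i'
  -- triviality facts
  have hca : ∀ i : ℕ, i < n → b ^ i * a ≠ 1 := by
    intro i hi h
    have h10 : b ^ i * a ^ 1 = b ^ 0 * a ^ 0 := by simpa using h
    have := ((hcomp i 1 0 0).mp h10).2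
    rw [Nat.mod_eq_of_lt hm, Nat.zero_mod] at this
    omega
  have hbne : b ≠ 1 := by
    intro h
    rw [h, orderOf_one] at hob
    omega
  have hbP : ∀ i : ℕ, b ∉ Subgroup.zpowers (b ^ i * a) := by
    intro i hb'
    rw [hmemP] at hb'
    obtain ⟨k, hk, hkk⟩ := hb'
    have h2 := (hcomp _ k 1 0).mp (by simpa using hkk)
    have hk0 : k = 0 := by
      have := h2.2
      rwa [Nat.mod_eq_of_lt hk, Nat.zero_mod] at this
    subst hk0
    exact hbne (by simpa using hkk.symm)
  -- trivial intersections
  have hPQ : ∀ i : ℕ, Subgroup.zpowers (b ^ i * a) ⊓ Subgroup.zpowers b = ⊥ := by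
    intro i
    rw [Subgroup.eq_bot_iff_forall]
    intro x hx
    rw [Subgroup.mem_inf, hmemP, hmemQ] at hx
    obtain ⟨⟨k, hk, rfl⟩, ⟨k', hk', hkk⟩⟩ := hx
    have h10 : b ^ (i * ∑ kk ∈ Finset.range k, s ^ kk) * a ^ k = b ^ k' * a ^ 0 := by
      rw [pow_zero, mul_one]; exact hkk.symm
    have := ((hcomp _ k k' 0).mp h10).2
    rw [Nat.mod_eq_of_lt hk, Nat.zero_mod] at this
    subst this
    simp
  have hPP : ∀ i i' : ℕ, i < n → i' < n → i ≠ i' →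
      Subgroup.zpowers (b ^ i * a) ⊓ Subgroup.zpowers (b ^ i' * a) = ⊥ := by
    intro i i' hi hi' hii
    rw [Subgroup.eq_bot_iff_forall]
    intro x hx
    rw [Subgroup.mem_inf, hmemP, hmemP] at hx
    obtain ⟨⟨k, hk, rfl⟩, ⟨k', hk', hkk⟩⟩ := hx
    have h2 := (hcomp _ k' _ k).mp hkk
    have hkeq : k' = k := by
      have := h2.2
      rwa [Nat.mod_eq_of_lt hk', Nat.mod_eq_of_lt hk] at this
    subst hkeq
    rcases Nat.eq_zero_or_pos k' with rfl | hk0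
    · simp
    · exfalso
      have hmod : Nat.ModEq n i' i :=
        Nat.ModEq.cancel_right_of_coprime (hcop k' hk0 hk) h2.1
      have : i' = i := by
        rwa [Nat.ModEq, Nat.mod_eq_of_lt hi', Nat.mod_eq_of_lt hi] at hmod
      exact hii this.symm
  -- μ-subgroup facts
  have hmuQ : IsMuSubgroup (Subgroup.zpowers b) := by
    refine ⟨aux_isCyclic_zpowers b, ?_⟩
    intro K hK hle
    obtain ⟨g, hgK, rfl⟩ := aux_cyclic_eq_zpowers hK
    rcases hcover g with hg | ⟨i, hi, hg⟩
    · exact le_antisymm hle (Subgroup.zpowers_le.mpr hg)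
    · exfalso
      exact hbP i (Subgroup.zpowers_le.mpr hg (hle (Subgroup.mem_zpowers b)))
  have hmuP : ∀ i : ℕ, i < n → IsMuSubgroup (Subgroup.zpowers (b ^ i * a)) := by
    intro i hi
    refine ⟨aux_isCyclic_zpowers _, ?_⟩
    intro K hK hle
    obtain ⟨g, hgK, rfl⟩ := aux_cyclic_eq_zpowers hK
    rcases hcover g with hg | ⟨i', hi', hg⟩
    · exfalso
      have hmem : b ^ i * a ∈ Subgroup.zpowers (b ^ i * a) ⊓ Subgroup.zpowers b :=
        Subgroup.mem_inf.mpr ⟨Subgroup.mem_zpowers _,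
          Subgroup.zpowers_le.mpr hg (hle (Subgroup.mem_zpowers _))⟩
      rw [hPQ i] at hmem
      exact hca i hi (Subgroup.mem_bot.mp hmem)
    · by_cases hii : i = i'
      · subst hii
        exact le_antisymm hle (Subgroup.zpowers_le.mpr hg)
      · exfalso
        have hmem : b ^ i * a ∈
            Subgroup.zpowers (b ^ i * a) ⊓ Subgroup.zpowers (b ^ i' * a) :=
          Subgroup.mem_inf.mpr ⟨Subgroup.mem_zpowers _,
            Subgroup.zpowers_le.mpr hg (hle (Subgroup.mem_zpowers _))⟩
        rw [hPP i i' hi hi' hii] at hmem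
        exact hca i hi (Subgroup.mem_bot.mp hmem)
  have hchar : ∀ C : Subgroup G, IsMuSubgroup C ↔
      C = Subgroup.zpowers b ∨ ∃ i < n, C = Subgroup.zpowers (b ^ i * a) := by
    intro C
    constructor
    · rintro ⟨hCc, hCmax⟩
      obtain ⟨g, hgC, rfl⟩ := aux_cyclic_eq_zpowers hCc
      rcases hcover g with hg | ⟨i, hi, hg⟩
      · exact Or.inl (hCmax _ (aux_isCyclic_zpowers b) (Subgroup.zpowers_le.mpr hg))
      · exact Or.inr ⟨i, hi, hCmax _ (aux_isCyclic_zpowers _) (Subgroup.zpowers_le.mpr hg)⟩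
    · rintro (rfl | ⟨i, hi, rfl⟩)
      · exact hmuQ
      · exact hmuP i hi
  -- not cyclic
  have hnc : ¬ IsCyclic G := by
    intro hG
    obtain ⟨g, hg⟩ := hG.exists_generator
    rcases hcover g with hgQ | ⟨i, hi, hgP⟩
    · have ha' : a ∈ Subgroup.zpowers b := Subgroup.zpowers_le.mpr hgQ (hg a)
      rw [hmemQ] at ha'
      obtain ⟨k, hk, hkk⟩ := ha'
      have h10 : b ^ k * a ^ 0 = b ^ 0 * a ^ 1 := by simpa using hkk
      have := ((hcomp k 0 0 1).mp h10).2
      rw [Nat.zero_mod, Nat.mod_eq_of_lt hm] at this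
      omega
    · exact hbP i (Subgroup.zpowers_le.mpr hgP (hg b))
  -- the flower group structure
  have hflower : IsFlowerGroup (⊥ : Subgroup G) := by
    refine ⟨hnc, ?_⟩
    intro C C' hC hC' hne
    rcases (hchar C).mp hC with rfl | ⟨i, hi, rfl⟩ <;>
      rcases (hchar C').mp hC' with rfl | ⟨i', hi', rfl⟩
    · exact absurd rfl hne
    · rw [inf_comm]; exact hPQ i'
    · exact hPQ i
    · refine hPP i i' hi hi' (fun h => hne (by rw [h]))
  -- injectivity of the petal family
  have hinj : Function.Injective (fun i : Fin n => Subgroup.zpowers (b ^ (i : ℕ) * a)) := by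
    intro i i' h
    by_contra hne
    have hne' : (i : ℕ) ≠ (i' : ℕ) := fun hc => hne (Fin.ext hc)
    have h' : Subgroup.zpowers (b ^ (i : ℕ) * a) = Subgroup.zpowers (b ^ (i' : ℕ) * a) := h
    have hmem : b ^ (i : ℕ) * a ∈
        Subgroup.zpowers (b ^ (i : ℕ) * a) ⊓ Subgroup.zpowers (b ^ (i' : ℕ) * a) :=
      Subgroup.mem_inf.mpr ⟨Subgroup.mem_zpowers _, h' ▸ Subgroup.mem_zpowers _⟩
    rw [hPP i i' i.isLt i'.isLt hne'] at hmem
    exact hca i i.isLt (Subgroup.mem_bot.mp hmem)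
  exact ⟨hflower, hchar, hQcard, fun i _ => hPcard i, hinj⟩
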